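/- Let W be a discrete memoryless channel with R_cr < C, and let Q ∈ P(𝒳) and R be such that the pair (Q,W) is singular and R_cr(Q) < R < I(Q;W). Put ρ* := −∂E_r(r,Q)/∂r|_{r=R} and let Λ(λ) := Λ_{ρ*}(λ). Then Λ''(λ) > 0 for every λ ∈ ℝ. -/

import Mathlib

open Real BigOperators
open scoped Classical

namespace RCB

private lemma pos_parts {a b : ℝ} (ha : 0 ≤ a) (hb : 0 ≤ b) (h : 0 < a * b) : 0 < a ∧ 0 < b := by
  rcases mul_pos_iff.1 h with ⟨h1, h2⟩ | ⟨h1, h2⟩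
  · exact ⟨h1, h2⟩
  · exact absurd h1 (not_lt.2 ha)

private lemma rpow_right_inj' {a b e : ℝ} (ha : 0 ≤ a) (hb : 0 ≤ b) (he : 0 < e)
    (h : a ^ e = b ^ e) : a = b := by
  rcases lt_trichotomy a b with hlt | heq | hgt
  · exact absurd h (Real.rpow_lt_rpow ha hlt he).ne
  · exact heq
  · exact absurd h.symm (Real.rpow_lt_rpow hb hgt he).ne

private lemma antitone_deriv_nonpos {f : ℝ → ℝ} (hf : Antitone f) (R : ℝ) :
    deriv f R ≤ 0 := by
  by_cases h : DifferentiableAt ℝ f R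
  · have h1 := h.hasDerivAt
    rw [hasDerivAt_iff_tendsto_slope] at h1
    have h2 : Filter.Tendsto (slope f R) (nhdsWithin R (Set.Ioi R)) (nhds (deriv f R)) :=
      h1.mono_left (nhdsWithin_mono _ fun x hx => ne_of_gt hx)
    refine le_of_tendsto h2 ?_
    filter_upwards [self_mem_nhdsWithin] with x hx
    rw [slope_def_field]
    have hfx : f x ≤ f R := hf (le_of_lt hx)
    have hx' : (0:ℝ) ≤ x - R := by simp [le_of_lt (show R < x from hx)]
    exact div_nonpos_iff.2 (Or.inr ⟨by linarith, hx'⟩)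
  · simp [deriv_zero_of_not_differentiableAt h]


private lemma var_pos' {ι : Type*} [Fintype ι] (w z : ι → ℝ) (hw : ∀ i, 0 ≤ w i)
    (p q : ι) (hp : 0 < w p) (hq : 0 < w q) (hpq : z p ≠ z q) :
    0 < (∑ i, w i * z i ^ 2) * (∑ i, w i) - (∑ i, w i * z i) * (∑ i, w i * z i) := by
  have key : ∑ i, ∑ j, w i * w j * (z i - z j) ^ 2
      = 2 * ((∑ i, w i * z i ^ 2) * (∑ i, w i) - (∑ i, w i * z i) * (∑ i, w i * z i)) := by
    have e1 : ∀ i : ι, ∑ j, w i * w j * (z i - z j) ^ 2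
        = w i * z i ^ 2 * (∑ j, w j) - w i * z i * 2 * (∑ j, w j * z j) + w i * (∑ j, w j * z j ^ 2) := by
      intro i
      have : ∀ j : ι, w i * w j * (z i - z j) ^ 2
          = w i * z i ^ 2 * w j - w i * z i * 2 * (w j * z j) + w i * (w j * z j ^ 2) := fun j => by ring
      rw [Finset.sum_congr rfl fun j _ => this j, Finset.sum_add_distrib, Finset.sum_sub_distrib,
        ← Finset.mul_sum, ← Finset.mul_sum, ← Finset.mul_sum]
    calc ∑ i, ∑ j, w i * w j * (z i - z j) ^ 2
        = ∑ i, (w i * z i ^ 2 * (∑ j, w j) - w i * z i * 2 * (∑ j, w j * z j) + w i * (∑ j, w j * z j ^ 2)) :=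
          Finset.sum_congr rfl fun i _ => e1 i
      _ = (∑ i, w i * z i ^ 2) * (∑ j, w j) - (∑ i, w i * z i) * 2 * (∑ j, w j * z j) + (∑ i, w i) * (∑ j, w j * z j ^ 2) := by
          rw [Finset.sum_add_distrib, Finset.sum_sub_distrib, ← Finset.sum_mul, ← Finset.sum_mul,
            ← Finset.sum_mul, ← Finset.sum_mul]
      _ = _ := by ring
  have pos : 0 < ∑ i, ∑ j, w i * w j * (z i - z j) ^ 2 := by
    refine Finset.sum_pos' (fun i _ => Finset.sum_nonneg fun j _ =>
      mul_nonneg (mul_nonneg (hw i) (hw j)) (sq_nonneg _)) ⟨p, Finset.mem_univ p, ?_⟩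
    refine Finset.sum_pos' (fun j _ => mul_nonneg (mul_nonneg (hw p) (hw j)) (sq_nonneg _))
      ⟨q, Finset.mem_univ q, ?_⟩
    have hzz : (0:ℝ) < (z p - z q) ^ 2 := by
      have := sub_ne_zero.2 hpq
      positivity
    exact mul_pos (mul_pos hp hq) hzz
  linarith [key ▸ pos]

private lemma lse_deriv2_pos {ι : Type*} [Fintype ι] (c z : ι → ℝ) (hc : ∀ i, 0 ≤ c i)
    (p q : ι) (hp : 0 < c p) (hq : 0 < c q) (hpq : z p ≠ z q) (t : ℝ) :
    0 < deriv (deriv (fun s => Real.log (∑ i, c i * Real.exp (s * z i)))) t := by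
  set M : ℝ → ℝ := fun s => ∑ i, c i * Real.exp (s * z i) with hM
  set M1 : ℝ → ℝ := fun s => ∑ i, c i * z i * Real.exp (s * z i) with hM1
  set M2 : ℝ → ℝ := fun s => ∑ i, c i * z i ^ 2 * Real.exp (s * z i) with hM2
  have hMpos : ∀ s, 0 < M s := fun s =>
    Finset.sum_pos' (fun i _ => mul_nonneg (hc i) (Real.exp_pos _).le)
      ⟨p, Finset.mem_univ p, mul_pos hp (Real.exp_pos _)⟩
  have hdM : ∀ s, HasDerivAt M (M1 s) s := by
    intro s
    refine HasDerivAt.fun_sum (𝕜 := ℝ) (F := ℝ) fun i _ => ?_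
    have h1 : HasDerivAt (fun u : ℝ => u * z i) (z i) s := hasDerivAt_mul_const (z i)
    have h2 := (h1.exp).const_mul (c i)
    exact h2.congr_deriv (by ring)
  have hdM1 : ∀ s, HasDerivAt M1 (M2 s) s := by
    intro s
    refine HasDerivAt.fun_sum (𝕜 := ℝ) (F := ℝ) fun i _ => ?_
    have h1 : HasDerivAt (fun u : ℝ => u * z i) (z i) s := hasDerivAt_mul_const (z i)
    have h2 := (h1.exp).const_mul (c i * z i)
    exact h2.congr_deriv (by ring)
  have hd1 : deriv (fun s => Real.log (∑ i, c i * Real.exp (s * z i))) = fun s => M1 s / M s := by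
    funext s
    exact ((hdM s).log (hMpos s).ne').deriv
  rw [hd1]
  have hd2 : HasDerivAt (fun s => M1 s / M s) ((M2 t * M t - M1 t * M1 t) / M t ^ 2) t :=
    (hdM1 t).div (hdM t) (hMpos t).ne'
  rw [hd2.deriv]
  apply div_pos _ (pow_pos (hMpos t) 2)
  have hvp := var_pos' (fun i => c i * Real.exp (t * z i)) z
    (fun i => mul_nonneg (hc i) (Real.exp_pos _).le) p q
    (mul_pos hp (Real.exp_pos _)) (mul_pos hq (Real.exp_pos _)) hpq
  have e2 : M2 t = ∑ i, (c i * Real.exp (t * z i)) * z i ^ 2 :=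
    Finset.sum_congr rfl fun i _ => by ring
  have e1 : M1 t = ∑ i, (c i * Real.exp (t * z i)) * z i :=
    Finset.sum_congr rfl fun i _ => by ring
  have e0 : M t = ∑ i, c i * Real.exp (t * z i) := rfl
  rw [e2, e1, e0]
  linarith [hvp]


/-- A probability distribution on a finite alphabet. -/
def IsDist {α : Type*} [Fintype α] (Q : α → ℝ) : Prop :=
  (∀ a, 0 ≤ Q a) ∧ ∑ a, Q a = 1

/-- A discrete memoryless channel, i.e. a stochastic matrix from `X` to `Y`. -/
def IsChannel {X Y : Type*} [Fintype X] [Fintype Y] (W : X → Y → ℝ) : Prop :=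
  (∀ x y, 0 ≤ W x y) ∧ ∀ x, ∑ y, W x y = 1

/-- The Gallager function `E_o(ρ, Q)`. -/
noncomputable def Eo {X Y : Type*} [Fintype X] [Fintype Y]
    (W : X → Y → ℝ) (ρ : ℝ) (Q : X → ℝ) : ℝ :=
  - Real.log (∑ y, (∑ x, Q x * W x y ^ (1 / (1 + ρ))) ^ (1 + ρ))

/-- The random coding exponent `E_r(R, Q)` for input distribution `Q`. -/
noncomputable def ErQ {X Y : Type*} [Fintype X] [Fintype Y]
    (W : X → Y → ℝ) (R : ℝ) (Q : X → ℝ) : ℝ :=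
  sSup ((fun ρ => -ρ * R + Eo W ρ Q) '' Set.Icc (0 : ℝ) 1)

/-- The random coding exponent `E_r(R)`. -/
noncomputable def Er {X Y : Type*} [Fintype X] [Fintype Y]
    (W : X → Y → ℝ) (R : ℝ) : ℝ :=
  sSup {v : ℝ | ∃ Q : X → ℝ, IsDist Q ∧ v = ErQ W R Q}

/-- The mutual information `I(Q; W)` (natural logarithm). -/
noncomputable def MI {X Y : Type*} [Fintype X] [Fintype Y]
    (W : X → Y → ℝ) (Q : X → ℝ) : ℝ :=
  ∑ x, ∑ y, Q x * W x y * Real.log (W x y / ∑ x', Q x' * W x' y)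

/-- The capacity `C = max_Q I(Q;W)`. -/
noncomputable def Capacity {X Y : Type*} [Fintype X] [Fintype Y]
    (W : X → Y → ℝ) : ℝ :=
  sSup {v : ℝ | ∃ Q : X → ℝ, IsDist Q ∧ v = MI W Q}

/-- The critical rate of the input distribution `Q`:
`R_cr(Q) = ∂E_o(ρ,Q)/∂ρ |_{ρ=1}`. -/
noncomputable def RcrQ {X Y : Type*} [Fintype X] [Fintype Y]
    (W : X → Y → ℝ) (Q : X → ℝ) : ℝ :=
  deriv (fun ρ => Eo W ρ Q) 1

/-- The critical rate of the channel: the largest `R` with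
`E_r(R) = -R + max_Q E_o(1,Q)`. -/
noncomputable def Rcr {X Y : Type*} [Fintype X] [Fintype Y]
    (W : X → Y → ℝ) : ℝ :=
  sSup {R : ℝ | Er W R = -R + sSup {v : ℝ | ∃ Q : X → ℝ, IsDist Q ∧ v = Eo W 1 Q}}

/-- The rate `R_∞ = inf {R ≥ 0 : E_SP(R) < ∞}` (finiteness of the
sphere-packing exponent expressed as boundedness of the family of affine maps). -/
noncomputable def Rinf {X Y : Type*} [Fintype X] [Fintype Y]
    (W : X → Y → ℝ) : ℝ :=
  sInf {R : ℝ | 0 ≤ R ∧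
    BddAbove {v : ℝ | ∃ (Q : X → ℝ) (ρ : ℝ), IsDist Q ∧ 0 ≤ ρ ∧ v = -ρ * R + Eo W ρ Q}}

/-- The pair `(Q, W)` is singular if `W(y|x) = W(y|z)` whenever
`Q(x)W(y|x)Q(z)W(y|z) > 0`. -/
def Singular {X Y : Type*} (W : X → Y → ℝ) (Q : X → ℝ) : Prop :=
  ∀ x y z, 0 < Q x * W x y * (Q z * W z y) → W x y = W z y

/-- `ρ^*_R(Q) = -∂E_r(a,Q)/∂a |_{a=R}`. -/
noncomputable def rhoStarQ {X Y : Type*} [Fintype X] [Fintype Y]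
    (W : X → Y → ℝ) (Q : X → ℝ) (R : ℝ) : ℝ :=
  - deriv (fun a => ErQ W a Q) R

/-- The number of messages of an `(N, R)` code: `⌈exp (N R)⌉`. -/
noncomputable def nMsgs (N : ℕ) (R : ℝ) : ℕ := ⌈Real.exp (N * R)⌉₊

/-- The `N`-fold memoryless extension of the channel `W`. -/
noncomputable def Wn {X Y : Type*} (W : X → Y → ℝ) {N : ℕ}
    (c : Fin N → X) (y : Fin N → Y) : ℝ :=
  ∏ n, W (c n) (y n)

/-- The maximal error probability of the code `(f, φ)` over the `N`-fold
memoryless extension of `W`. -/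
noncomputable def Pmax {X Y : Type*} [Fintype X] [Fintype Y] {M N : ℕ}
    (W : X → Y → ℝ) (f : Fin M → Fin N → X) (φ : (Fin N → Y) → Fin M) : ℝ :=
  ⨆ m : Fin M, ∑ y : Fin N → Y, Wn W (f m) y * (if φ y ≠ m then (1 : ℝ) else 0)

/-- The ensemble average error probability `P̄_e(Q, N, R)`: the `⌈exp (N R)⌉`
codewords are drawn i.i.d. from `Q^N` and decoded by maximum-likelihood
decoding, ties counted as errors. -/
noncomputable def Pbar {X Y : Type*} [Fintype X] [Fintype Y]
    (W : X → Y → ℝ) (Q : X → ℝ) (N : ℕ) (R : ℝ) : ℝ :=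
  ∑ c : Fin (nMsgs N R) → Fin N → X,
    (∏ m, ∏ n, Q (c m n)) *
      ((nMsgs N R : ℝ)⁻¹ *
        ∑ m, ∑ y : Fin N → Y,
          Wn W (c m) y *
            (if ∃ m', m' ≠ m ∧ Wn W (c m) y ≤ Wn W (c m') y then (1 : ℝ) else 0))

/-- The tilted output distribution `f_ρ`. -/
noncomputable def fRho {X Y : Type*} [Fintype X] [Fintype Y]
    (W : X → Y → ℝ) (Q : X → ℝ) (ρ : ℝ) (y : Y) : ℝ :=
  (∑ x, Q x * W x y ^ (1 / (1 + ρ))) ^ (1 + ρ) /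
    ∑ b, (∑ a, Q a * W a b ^ (1 / (1 + ρ))) ^ (1 + ρ)

/-- The cumulant generating function
`Λ_ρ(λ) = log E_{P_{X,Y}}[exp(λ log (f_ρ(Y)/W(Y|X)))]` with `P_{X,Y} = Q × W`. -/
noncomputable def Lam {X Y : Type*} [Fintype X] [Fintype Y]
    (W : X → Y → ℝ) (Q : X → ℝ) (ρ : ℝ) (t : ℝ) : ℝ :=
  Real.log (∑ x, ∑ y, Q x * W x y * Real.exp (t * Real.log (fRho W Q ρ y / W x y)))

/-- `P_{X,Y,Z}(S̃_Q)` where `P_{X,Y,Z}(x,y,z) = Q(x)W(y|x)Q(z)` and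
`S̃_Q = {(x,y,z) : Q(x)W(y|x)Q(z)W(y|z) > 0}`. -/
noncomputable def PStilde {X Y : Type*} [Fintype X] [Fintype Y]
    (W : X → Y → ℝ) (Q : X → ℝ) : ℝ :=
  ∑ x, ∑ y, ∑ z,
    if 0 < Q x * W x y * (Q z * W z y) then Q x * W x y * Q z else 0

/-- The bivariate cumulant generating function `Λ_{1,ρ}(v)` with respect to the
conditional distribution `P̃_{X,Y,Z}` of `P_{X,Y,Z}` given `S̃_Q`. -/
noncomputable def Lam1 {X Y : Type*} [Fintype X] [Fintype Y]
    (W : X → Y → ℝ) (Q : X → ℝ) (ρ : ℝ) (v : ℝ × ℝ) : ℝ :=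
  Real.log ((∑ x, ∑ y, ∑ z,
    if 0 < Q x * W x y * (Q z * W z y) then
      Q x * W x y * Q z *
        Real.exp (v.1 * Real.log (W x y / fRho W Q ρ y) +
          v.2 * Real.log (W z y / W x y))
    else 0) / PStilde W Q)

/-- The subdifferential of `f : ℝ → ℝ` at `R` (for convex `f`). -/
def Subderiv (f : ℝ → ℝ) (R : ℝ) : Set ℝ :=
  {g : ℝ | ∀ x, f R + g * (x - R) ≤ f x}

/-- The tilted backward channel `P^ρ_{X|Y}`. -/
noncomputable def PXgY {X Y : Type*} [Fintype X]
    (W : X → Y → ℝ) (Q : X → ℝ) (ρ : ℝ) (x : X) (y : Y) : ℝ :=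
  Q x * W x y ^ (1 / (1 + ρ)) / ∑ a, Q a * W a y ^ (1 / (1 + ρ))

/-- The tilted joint distribution `P^ρ_{X,Y}(x,y) = P^ρ_{X|Y}(x|y) P^ρ_Y(y)`. -/
noncomputable def PXY {X Y : Type*} [Fintype X] [Fintype Y]
    (W : X → Y → ℝ) (Q : X → ℝ) (ρ : ℝ) (x : X) (y : Y) : ℝ :=
  PXgY W Q ρ x y * fRho W Q ρ y

/-- Singular case: the cumulant generating function `Λ = Λ_{ρ*}` satisfies
`Λ''(λ) > 0` for all `λ ∈ ℝ`. -/
theorem statement16 {X Y : Type*} [Fintype X] [Fintype Y] [Nonempty X] [Nonempty Y]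
    (W : X → Y → ℝ) (hW : IsChannel W) (hcr : Rcr W < Capacity W)
    (Q : X → ℝ) (hQ : IsDist Q) (hsing : Singular W Q)
    (R : ℝ) (hR1 : RcrQ W Q < R) (hR2 : R < MI W Q)
    (ρs : ℝ) (hρs : ρs = - deriv (fun a => ErQ W a Q) R) :
    ∀ t : ℝ, 0 < deriv (deriv (fun s => Lam W Q ρs s)) t := by
  obtain ⟨hQ0, hQ1⟩ := hQ
  obtain ⟨hW0, hW1⟩ := hW
  have htot : ∑ x, ∑ y, Q x * W x y = 1 := by
    have h : ∀ x : X, ∑ y, Q x * W x y = Q x := fun x => by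
      rw [← Finset.mul_sum, hW1 x, mul_one]
    rw [Finset.sum_congr rfl fun x _ => h x, hQ1]
  obtain ⟨x₀, y₀, hxy₀⟩ : ∃ x y, 0 < Q x * W x y := by
    by_contra hcon
    push_neg at hcon
    have h : ∀ x y, Q x * W x y = 0 := fun x y =>
      le_antisymm (hcon x y) (mul_nonneg (hQ0 x) (hW0 x y))
    simp only [h, Finset.sum_const_zero] at htot
    exact one_ne_zero htot.symm
  have hQx₀ : 0 < Q x₀ := (pos_parts (hQ0 x₀) (hW0 x₀ y₀) hxy₀).1
  have hWx₀ : 0 < W x₀ y₀ := (pos_parts (hQ0 x₀) (hW0 x₀ y₀) hxy₀).2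
  -- ρs is nonnegative
  have hρ0 : 0 ≤ ρs := by
    rw [hρs, neg_nonneg]
    have hBdd : ∀ a : ℝ, BddAbove ((fun ρ => -ρ * a + Eo W ρ Q) '' Set.Icc (0:ℝ) 1) := by
      intro a
      refine ⟨|a| + -Real.log ((Q x₀ * W x₀ y₀) ^ (2:ℝ)), ?_⟩
      rintro v ⟨ρ, ⟨hρ1, hρ2⟩, rfl⟩
      have h1ρ : (0:ℝ) < 1 + ρ := by linarith
      have hWle1 : W x₀ y₀ ≤ 1 := by
        rw [← hW1 x₀]
        exact Finset.single_le_sum (fun y _ => hW0 x₀ y) (Finset.mem_univ y₀)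
      have hQle1 : Q x₀ ≤ 1 := by
        rw [← hQ1]
        exact Finset.single_le_sum (fun x _ => hQ0 x) (Finset.mem_univ x₀)
      have hε1 : Q x₀ * W x₀ y₀ ≤ 1 := by nlinarith
      have hinner : Q x₀ * W x₀ y₀ ≤ ∑ x, Q x * W x y₀ ^ (1/(1+ρ)) := by
        have h1 : W x₀ y₀ ^ ((1:ℝ)) ≤ W x₀ y₀ ^ (1/(1+ρ)) :=
          Real.rpow_le_rpow_of_exponent_ge hWx₀ hWle1 (by rw [div_le_one h1ρ]; linarith)
        rw [Real.rpow_one] at h1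
        calc Q x₀ * W x₀ y₀ ≤ Q x₀ * W x₀ y₀ ^ (1/(1+ρ)) :=
              mul_le_mul_of_nonneg_left h1 (hQ0 x₀)
          _ ≤ _ := Finset.single_le_sum
              (fun x _ => mul_nonneg (hQ0 x) (Real.rpow_nonneg (hW0 x y₀) _)) (Finset.mem_univ x₀)
      have hsum : (Q x₀ * W x₀ y₀) ^ (2:ℝ) ≤ ∑ y, (∑ x, Q x * W x y ^ (1/(1+ρ))) ^ (1+ρ) := by
        have h1 : (Q x₀ * W x₀ y₀) ^ (2:ℝ) ≤ (Q x₀ * W x₀ y₀) ^ (1+ρ) :=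
          Real.rpow_le_rpow_of_exponent_ge hxy₀ hε1 (by linarith)
        have h2 : (Q x₀ * W x₀ y₀) ^ (1+ρ) ≤ (∑ x, Q x * W x y₀ ^ (1/(1+ρ))) ^ (1+ρ) :=
          Real.rpow_le_rpow hxy₀.le hinner h1ρ.le
        refine (h1.trans h2).trans (Finset.single_le_sum (fun y _ =>
          Real.rpow_nonneg (Finset.sum_nonneg fun x _ =>
            mul_nonneg (hQ0 x) (Real.rpow_nonneg (hW0 x y) _)) _) (Finset.mem_univ y₀))
      have hEole : Eo W ρ Q ≤ -Real.log ((Q x₀ * W x₀ y₀) ^ (2:ℝ)) := by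
        unfold Eo
        exact neg_le_neg (Real.log_le_log (Real.rpow_pos_of_pos hxy₀ 2) hsum)
      show -ρ * a + Eo W ρ Q ≤ |a| + -Real.log ((Q x₀ * W x₀ y₀) ^ (2:ℝ))
      have habs : -ρ * a ≤ |a| := by
        calc -ρ * a ≤ |(-ρ * a)| := le_abs_self _
          _ = ρ * |a| := by rw [abs_mul, abs_neg, abs_of_nonneg hρ1]
          _ ≤ 1 * |a| := mul_le_mul_of_nonneg_right hρ2 (abs_nonneg a)
          _ = |a| := one_mul _
      linarith
    have hmono : Antitone (fun a => ErQ W a Q) := by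
      intro a b hab
      unfold ErQ
      refine csSup_le (((Set.nonempty_Icc.2 zero_le_one).image _)) ?_
      rintro v ⟨ρ, hρmem, rfl⟩
      show -ρ * b + Eo W ρ Q ≤ _
      have h1 : -ρ * b + Eo W ρ Q ≤ -ρ * a + Eo W ρ Q := by nlinarith [hρmem.1]
      exact h1.trans (le_csSup (hBdd a) ⟨ρ, hρmem, rfl⟩)
    exact antitone_deriv_nonpos hmono R
  have h1ρ : (0:ℝ) < 1 + ρs := by linarith
  -- common notation
  set Qs : Y → ℝ := fun y => ∑ x, if 0 < Q x * W x y then Q x else 0 with hQsdef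
  have hQsnn : ∀ y, 0 ≤ Qs y := fun y => Finset.sum_nonneg fun x _ => by
    by_cases h : 0 < Q x * W x y
    · rw [if_pos h]; exact hQ0 x
    · rw [if_neg h]
  have hQspos : ∀ y x, 0 < Q x * W x y → 0 < Qs y := by
    intro y x hxy
    refine Finset.sum_pos' (fun a _ => ?_) ⟨x, Finset.mem_univ x, ?_⟩
    · by_cases h : 0 < Q a * W a y
      · rw [if_pos h]; exact hQ0 a
      · rw [if_neg h]
    · rw [if_pos hxy]; exact (pos_parts (hQ0 x) (hW0 x y) hxy).1
  have hzero : ∀ y x, ¬ 0 < Q x * W x y → Q x * W x y = 0 := fun y x h =>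
    le_antisymm (not_lt.1 h) (mul_nonneg (hQ0 x) (hW0 x y))
  have hSe : ∀ (e : ℝ), e ≠ 0 → ∀ y x', 0 < Q x' * W x' y →
      (∑ x, Q x * W x y ^ e) = Qs y * W x' y ^ e := by
    intro e he y x' hx'
    simp only [hQsdef]; rw [Finset.sum_mul]
    refine Finset.sum_congr rfl fun x _ => ?_
    by_cases hx : 0 < Q x * W x y
    · rw [if_pos hx, hsing x y x' (mul_pos hx hx')]
    · rw [if_neg hx, zero_mul]
      rcases mul_eq_zero.1 (hzero y x hx) with h | h
      · rw [h, zero_mul]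
      · rw [h, Real.zero_rpow he, mul_zero]
  set V : Y → ℝ := fun y => if h : ∃ x, 0 < Q x * W x y then W h.choose y else 0 with hVdef
  have hVnn : ∀ y, 0 ≤ V y := fun y => by
    simp only [hVdef]
    by_cases h : ∃ x, 0 < Q x * W x y
    · rw [dif_pos h]; exact hW0 _ y
    · rw [dif_neg h]
  have hVpos : ∀ y, (∃ x, 0 < Q x * W x y) → 0 < V y := by
    intro y hy
    have h := hy.choose_spec
    simp only [hVdef]; rw [dif_pos hy]
    exact (pos_parts (hQ0 _) (hW0 _ y) h).2
  have hAe : ∀ (ρ' : ℝ), 0 < 1 + ρ' → ∀ y,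
      (∑ x, Q x * W x y ^ (1/(1+ρ'))) ^ (1+ρ') = Qs y ^ (1+ρ') * V y := by
    intro ρ' h1' y
    have he : (1/(1+ρ')) ≠ 0 := one_div_ne_zero h1'.ne'
    by_cases hy : ∃ x, 0 < Q x * W x y
    · have hspec := hy.choose_spec
      rw [hSe _ he y hy.choose hspec,
        Real.mul_rpow (hQsnn y) (Real.rpow_nonneg (hW0 _ _) _),
        ← Real.rpow_mul (hW0 _ _), one_div_mul_cancel h1'.ne', Real.rpow_one]
      simp only [hVdef]; rw [dif_pos hy]
    · have hz : ∀ x, Q x * W x y ^ (1/(1+ρ')) = 0 := by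
        intro x
        rcases mul_eq_zero.1 (hzero y x (by push_neg at hy; exact not_lt.2 (hy x))) with h | h
        · rw [h, zero_mul]
        · rw [h, Real.zero_rpow he, mul_zero]
      rw [Finset.sum_eq_zero fun x _ => hz x, Real.zero_rpow h1'.ne']
      simp only [hVdef]; rw [dif_neg hy, mul_zero]
  have hPY : ∀ y, (∑ x, Q x * W x y) = Qs y * V y := by
    intro y
    by_cases hy : ∃ x, 0 < Q x * W x y
    · have hspec := hy.choose_spec
      have h1 : (∑ x, Q x * W x y) = ∑ x, Q x * W x y ^ ((1:ℝ)) := by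
        simp [Real.rpow_one]
      rw [h1, hSe 1 one_ne_zero y hy.choose hspec, Real.rpow_one]
      simp only [hVdef]; rw [dif_pos hy]
    · have hy' := hy
      push_neg at hy
      rw [Finset.sum_eq_zero fun x _ => hzero y x (not_lt.2 (hy x))]
      simp only [hVdef]; rw [dif_neg hy', mul_zero]
  -- the key non-degeneracy
  have hkey : ∃ x₁ y₁ x₂ y₂, 0 < Q x₁ * W x₁ y₁ ∧ 0 < Q x₂ * W x₂ y₂ ∧
      Real.log (fRho W Q ρs y₁ / W x₁ y₁) ≠ Real.log (fRho W Q ρs y₂ / W x₂ y₂) := by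
    by_contra hcon
    push_neg at hcon
    set D : ℝ := ∑ b, (∑ a, Q a * W a b ^ (1/(1+ρs))) ^ (1+ρs) with hDdef
    have hD0 : 0 < D := by
      rw [hDdef]
      refine Finset.sum_pos' (fun y _ => Real.rpow_nonneg (Finset.sum_nonneg fun x _ =>
        mul_nonneg (hQ0 x) (Real.rpow_nonneg (hW0 x y) _)) _) ⟨y₀, Finset.mem_univ y₀, ?_⟩
      rw [hAe ρs h1ρ y₀]
      exact mul_pos (Real.rpow_pos_of_pos (hQspos y₀ x₀ hxy₀) _) (hVpos y₀ ⟨x₀, hxy₀⟩)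
    have hfRho : ∀ y, fRho W Q ρs y = Qs y ^ (1+ρs) * V y / D := by
      intro y
      unfold fRho
      rw [hAe ρs h1ρ y, hDdef]
    have hfQ : ∀ y x, 0 < Q x * W x y → fRho W Q ρs y / W x y = Qs y ^ (1+ρs) / D := by
      intro y x hxy
      have hy : ∃ x, 0 < Q x * W x y := ⟨x, hxy⟩
      have hVy : V y = W x y := by
        simp only [hVdef]; rw [dif_pos hy]
        exact hsing hy.choose y x (mul_pos hy.choose_spec hxy)
      have hw : W x y ≠ 0 := (pos_parts (hQ0 x) (hW0 x y) hxy).2.ne'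
      rw [hfRho y, hVy]
      field_simp
    have hQconst : ∀ y x, 0 < Q x * W x y → Qs y = Qs y₀ := by
      intro y x hxy
      have h := hcon x y x₀ y₀ hxy hxy₀
      rw [hfQ y x hxy, hfQ y₀ x₀ hxy₀] at h
      have hpy : 0 < Qs y ^ (1+ρs) / D :=
        div_pos (Real.rpow_pos_of_pos (hQspos y x hxy) _) hD0
      have hpy₀ : 0 < Qs y₀ ^ (1+ρs) / D :=
        div_pos (Real.rpow_pos_of_pos (hQspos y₀ x₀ hxy₀) _) hD0
      have heq : Qs y ^ (1+ρs) / D = Qs y₀ ^ (1+ρs) / D := by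
        rw [← Real.exp_log hpy, h, Real.exp_log hpy₀]
      have heq2 : Qs y ^ (1+ρs) = Qs y₀ ^ (1+ρs) := by
        have := congrArg (· * D) heq
        simpa [div_mul_cancel₀, hD0.ne'] using this
      exact rpow_right_inj' (hQsnn y) (hQsnn y₀) h1ρ heq2
    have hq0 : 0 < Qs y₀ := hQspos y₀ x₀ hxy₀
    have hQsV : ∀ y, Qs y * V y = Qs y₀ * V y := by
      intro y
      by_cases hy : ∃ x, 0 < Q x * W x y
      · rw [hQconst y hy.choose hy.choose_spec]
      · simp only [hVdef]; rw [dif_neg hy, mul_zero, mul_zero]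
    have hVsum : Qs y₀ * (∑ y, V y) = 1 := by
      rw [Finset.mul_sum, Finset.sum_congr rfl fun y _ => (hQsV y).symm,
        Finset.sum_congr rfl fun y _ => (hPY y).symm, ← Finset.sum_comm, htot]
    have hEo' : ∀ ρ' ∈ Set.Ioo (0:ℝ) 2, Eo W ρ' Q = ρ' * -Real.log (Qs y₀) := by
      intro ρ' hρ'
      have h1' : (0:ℝ) < 1 + ρ' := by linarith [hρ'.1]
      have hsum : ∑ y, (∑ x, Q x * W x y ^ (1/(1+ρ'))) ^ (1+ρ') = Qs y₀ ^ ρ' := by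
        have e1 : ∀ y, (∑ x, Q x * W x y ^ (1/(1+ρ'))) ^ (1+ρ') = Qs y₀ ^ (1+ρ') * V y := by
          intro y
          rw [hAe ρ' h1' y]
          by_cases hy : ∃ x, 0 < Q x * W x y
          · rw [hQconst y hy.choose hy.choose_spec]
          · simp only [hVdef]; rw [dif_neg hy, mul_zero, mul_zero]
        rw [Finset.sum_congr rfl fun y _ => e1 y, ← Finset.mul_sum, Real.rpow_add hq0,
          Real.rpow_one, mul_comm (Qs y₀) (Qs y₀ ^ ρ'), mul_assoc, hVsum, mul_one]
      unfold Eo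
      rw [hsum, Real.log_rpow hq0]
      ring
    have hRcr : RcrQ W Q = -Real.log (Qs y₀) := by
      have hev : (fun ρ' => Eo W ρ' Q) =ᶠ[nhds 1] (fun ρ' => ρ' * -Real.log (Qs y₀)) := by
        filter_upwards [Ioo_mem_nhds (by norm_num : (0:ℝ) < 1) (by norm_num : (1:ℝ) < 2)]
          with a ha using hEo' a ha
      unfold RcrQ
      rw [hev.deriv_eq]
      simpa using (hasDerivAt_mul_const (-Real.log (Qs y₀))).deriv
    have hMI : MI W Q = -Real.log (Qs y₀) := by
      unfold MI
      have hterm : ∀ x y, Q x * W x y * Real.log (W x y / ∑ x', Q x' * W x' y)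
          = Q x * W x y * -Real.log (Qs y₀) := by
        intro x y
        by_cases hxy : 0 < Q x * W x y
        · have hy : ∃ x, 0 < Q x * W x y := ⟨x, hxy⟩
          have hVy : V y = W x y := by
            simp only [hVdef]; rw [dif_pos hy]
            exact hsing hy.choose y x (mul_pos hy.choose_spec hxy)
          have hw : (0:ℝ) < W x y := (pos_parts (hQ0 x) (hW0 x y) hxy).2
          have hPY' : (∑ x', Q x' * W x' y) = Qs y₀ * W x y := by
            rw [hPY y, hQconst y x hxy, hVy]
          rw [hPY']
          have hdiv : W x y / (Qs y₀ * W x y) = (Qs y₀)⁻¹ := by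
            field_simp
          rw [hdiv, Real.log_inv]
        · rw [hzero y x hxy, zero_mul, zero_mul]
      rw [Finset.sum_congr rfl fun x _ => Finset.sum_congr rfl fun y _ => hterm x y]
      have : ∀ x : X, ∑ y, Q x * W x y * -Real.log (Qs y₀)
          = (∑ y, Q x * W x y) * -Real.log (Qs y₀) := fun x => (Finset.sum_mul _ _ _).symm
      rw [Finset.sum_congr rfl fun x _ => this x, ← Finset.sum_mul, htot, one_mul]
    rw [hRcr] at hR1
    rw [hMI] at hR2
    linarith
  obtain ⟨x₁, y₁, x₂, y₂, h₁, h₂, hne⟩ := hkey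
  intro t
  have hfun : (fun s => Lam W Q ρs s)
      = fun s => Real.log (∑ i : X × Y,
          Q i.1 * W i.1 i.2 * Real.exp (s * Real.log (fRho W Q ρs i.2 / W i.1 i.2))) := by
    funext s
    unfold Lam
    rw [Fintype.sum_prod_type]
  rw [hfun]
  exact lse_deriv2_pos (fun i : X × Y => Q i.1 * W i.1 i.2)
    (fun i : X × Y => Real.log (fRho W Q ρs i.2 / W i.1 i.2))
    (fun i => mul_nonneg (hQ0 i.1) (hW0 i.1 i.2))
    (x₁, y₁) (x₂, y₂) h₁ h₂ hne t


end RCB
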